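/- arXiv:2411.16015 — 2 statements merged into one kernel-verified Lean document; each statement's English description precedes it below -/
import Mathlib

section
/- Under assumption A1, let μ ∈ (0, 1] and x ∈ F_p⁰ satisfy δ(x, μ) ≤ 1/2. Then for any fixed x' ∈ F_p⁰ and (y', s') ∈ F_d⁰, one has min_{1≤j≤n} x_j ≥ αμ where α = 0.1·(min_{1≤j≤n} x'_j) / (n + ⟨x', s'⟩) > 0. -/
open Matrix

noncomputable def enorm {ι : Type*} [Fintype ι] (v : ι → ℝ) : ℝ :=
  Real.sqrt (∑ i, (v i) ^ 2)

noncomputable def opNorm {ι κ : Type*} [Fintype ι] [Fintype κ]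
    (M : Matrix ι κ ℝ) : ℝ :=
  sSup {r : ℝ | ∃ v : κ → ℝ, _root_.enorm v ≤ 1 ∧ r = _root_.enorm (M *ᵥ v)}

noncomputable def lambdaMin {ι : Type*} [Fintype ι] (M : Matrix ι ι ℝ) : ℝ :=
  sInf {r : ℝ | ∃ v : ι → ℝ, _root_.enorm v = 1 ∧ r = v ⬝ᵥ (M *ᵥ v)}

noncomputable def lambdaMax {ι : Type*} [Fintype ι] (M : Matrix ι ι ℝ) : ℝ :=
  sSup {r : ℝ | ∃ v : ι → ℝ, _root_.enorm v = 1 ∧ r = v ⬝ᵥ (M *ᵥ v)}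

noncomputable def condNum {ι : Type*} [Fintype ι] (M : Matrix ι ι ℝ) : ℝ :=
  lambdaMax M / lambdaMin M

noncomputable def gradProj {m n : ℕ} (B : Matrix (Fin m) (Fin n) ℝ) :
    Matrix (Fin n) (Fin n) ℝ :=
  1 - Bᵀ * (B * Bᵀ)⁻¹ * B

/-- The proximity measure `δ(x, μ) = ‖P_{AX}((1/μ) X c - e)‖`. -/
noncomputable def prox {m n : ℕ} (A : Matrix (Fin m) (Fin n) ℝ)
    (c x : Fin n → ℝ) (μ : ℝ) : ℝ :=
  enorm (gradProj (A * Matrix.diagonal x) *ᵥ (μ⁻¹ • (Matrix.diagonal x *ᵥ c) - 1))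

/-- The proximity measure as `min_{(y,s) ∈ F_d} ‖(1/μ) X s - e‖`. -/
noncomputable def proxMin {m n : ℕ} (A : Matrix (Fin m) (Fin n) ℝ)
    (c x : Fin n → ℝ) (μ : ℝ) : ℝ :=
  sInf {r : ℝ | ∃ (y : Fin m → ℝ) (s : Fin n → ℝ),
    Aᵀ *ᵥ y + s = c ∧ (∀ i, 0 ≤ s i) ∧
    r = _root_.enorm (μ⁻¹ • (Matrix.diagonal x *ᵥ s) - 1)}

/-- The primal normal matrix `A X² Aᵀ` is positive semidefinite. -/
theorem normalPSD {m n : ℕ} (A : Matrix (Fin m) (Fin n) ℝ) (x : Fin n → ℝ) :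
    (A * Matrix.diagonal x ^ 2 * Aᵀ).PosSemidef := by
  have h : A * Matrix.diagonal x ^ 2 * Aᵀ
      = (A * Matrix.diagonal x) * (A * Matrix.diagonal x)ᴴ := by
    rw [Matrix.conjTranspose_mul, Matrix.conjTranspose_eq_transpose_of_trivial,
      Matrix.conjTranspose_eq_transpose_of_trivial, Matrix.diagonal_transpose, pow_two,
      Matrix.mul_assoc, Matrix.mul_assoc, Matrix.mul_assoc]
  rw [h]
  exact Matrix.posSemidef_self_mul_conjTranspose _


lemma abs_le_enorm {ι : Type*} [Fintype ι] (v : ι → ℝ) (j : ι) : |v j| ≤ _root_.enorm v := by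
  rw [← Real.sqrt_sq_eq_abs]
  exact Real.sqrt_le_sqrt (Finset.single_le_sum (fun i _ => sq_nonneg (v i)) (Finset.mem_univ j))

/-- coordinatewise lower bound `min_j x_j ≥ αμ` for points near
the central path. -/
theorem stmt_6 {m n : ℕ} (A : Matrix (Fin m) (Fin n) ℝ) (b : Fin m → ℝ) (c : Fin n → ℝ)
    (hn : 0 < n)
    -- Assumption A1: nonempty primal and dual interiors, full row rank
    (hrank : A.rank = m)
    (hFp0 : ∃ x0 : Fin n → ℝ, A *ᵥ x0 = b ∧ ∀ i, 0 < x0 i)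
    (hFd0 : ∃ (y0 : Fin m → ℝ) (s0 : Fin n → ℝ), Aᵀ *ᵥ y0 + s0 = c ∧ ∀ i, 0 < s0 i)
    (μ : ℝ) (hμ0 : 0 < μ) (hμ1 : μ ≤ 1)
    (x : Fin n → ℝ) (hxfeas : A *ᵥ x = b) (hxpos : ∀ i, 0 < x i)
    (hδ : prox A c x μ ≤ 1 / 2)
    (x' : Fin n → ℝ) (hx'feas : A *ᵥ x' = b) (hx'pos : ∀ i, 0 < x' i)
    (y' : Fin m → ℝ) (s' : Fin n → ℝ)
    (hd'feas : Aᵀ *ᵥ y' + s' = c) (hs'pos : ∀ i, 0 < s' i) :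
    0 < 0.1 * sInf (Set.range x') / (n + x' ⬝ᵥ s') ∧
    ∀ j, 0.1 * sInf (Set.range x') / (n + x' ⬝ᵥ s') * μ ≤ x j := by
  classical
  haveI : Nonempty (Fin n) := ⟨⟨0, hn⟩⟩
  -- construct a dual feasible s close to the central path
  have hexist : ∃ s : Fin n → ℝ, (∃ yy, Aᵀ *ᵥ yy + s = c) ∧
      _root_.enorm (μ⁻¹ • (Matrix.diagonal x *ᵥ s) - 1) ≤ 1 / 2 := by
    set B : Matrix (Fin m) (Fin n) ℝ := A * Matrix.diagonal x with hB
    set v : Fin n → ℝ := μ⁻¹ • (Matrix.diagonal x *ᵥ c) - 1 with hv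
    set y : Fin m → ℝ := μ • ((B * Bᵀ)⁻¹ *ᵥ (B *ᵥ v)) with hy
    refine ⟨c - Aᵀ *ᵥ y, ⟨y, by ring_nf⟩, ?_⟩
    have hBt : Bᵀ = Matrix.diagonal x * Aᵀ := by
      rw [hB, Matrix.transpose_mul, Matrix.diagonal_transpose]
    have hkey : μ⁻¹ • (Matrix.diagonal x *ᵥ (c - Aᵀ *ᵥ y)) - 1 = gradProj B *ᵥ v := by
      rw [gradProj, Matrix.sub_mulVec, Matrix.one_mulVec, Matrix.mulVec_sub]
      have h1 : Matrix.diagonal x *ᵥ (Aᵀ *ᵥ y) = Bᵀ *ᵥ y := by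
        rw [hBt, ← Matrix.mulVec_mulVec]
      rw [h1, hy, Matrix.mulVec_smul, smul_sub, smul_smul, inv_mul_cancel₀ hμ0.ne', one_smul]
      rw [Matrix.mulVec_mulVec, Matrix.mulVec_mulVec, ← Matrix.mul_assoc]
      ring_nf
      rw [hv]; abel
    rw [hkey]; exact hδ
  obtain ⟨s, ⟨y, hdfeas⟩, hnormv⟩ := hexist
  -- coordinatewise bounds
  have hxs : ∀ j, μ / 2 ≤ x j * s j ∧ x j * s j ≤ 3 / 2 * μ := by
    intro j
    have h := (abs_le_enorm _ j).trans hnormv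
    have hval : (μ⁻¹ • (Matrix.diagonal x *ᵥ s) - 1) j = μ⁻¹ * (x j * s j) - 1 := by
      simp [Matrix.mulVec_diagonal]
    rw [hval, abs_le] at h
    have hx : x j * s j = μ * (μ⁻¹ * (x j * s j)) := by field_simp
    constructor
    · rw [hx]; nlinarith [h.1]
    · rw [hx]; nlinarith [h.2]
  have hspos : ∀ j, 0 < s j := by
    intro j
    have h := (hxs j).1
    have := hxpos j
    nlinarith
  -- orthogonality
  have horth : (x - x') ⬝ᵥ (s - s') = 0 := by
    have hss' : s - s' = Aᵀ *ᵥ (y' - y) := by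
      have h1 : s = c - Aᵀ *ᵥ y := by rw [← hdfeas]; ring_nf
      have h2 : s' = c - Aᵀ *ᵥ y' := by rw [← hd'feas]; ring_nf
      rw [h1, h2, Matrix.mulVec_sub]
      ring_nf
    rw [hss', Matrix.dotProduct_mulVec, Matrix.vecMul_transpose, Matrix.mulVec_sub,
      hxfeas, hx'feas, sub_self]
    simp
  have horth' : x ⬝ᵥ s - x ⬝ᵥ s' - x' ⬝ᵥ s + x' ⬝ᵥ s' = 0 := by
    rw [sub_dotProduct, dotProduct_sub, dotProduct_sub] at horth
    linarith
  -- the min of x'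
  set mx := sInf (Set.range x') with hmx
  have hrne : (Set.range x').Nonempty := Set.range_nonempty x'
  have hrfin : (Set.range x').Finite := Set.finite_range x'
  have hmxmem : mx ∈ Set.range x' := hrne.csInf_mem hrfin
  obtain ⟨j0, hj0⟩ := hmxmem
  have hmxpos : 0 < mx := hj0 ▸ hx'pos j0
  have hmxle : ∀ j, mx ≤ x' j := fun j => csInf_le hrfin.bddBelow ⟨j, rfl⟩
  -- dot product bounds
  have hg : 0 < x' ⬝ᵥ s' :=
    Finset.sum_pos (fun i _ => mul_pos (hx'pos i) (hs'pos i)) Finset.univ_nonempty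
  have hxs'nn : 0 ≤ x ⬝ᵥ s' :=
    Finset.sum_nonneg fun i _ => (mul_pos (hxpos i) (hs'pos i)).le
  have hxsle : x ⬝ᵥ s ≤ 3 / 2 * μ * n := by
    calc x ⬝ᵥ s = ∑ i, x i * s i := rfl
      _ ≤ ∑ _i : Fin n, 3 / 2 * μ := Finset.sum_le_sum fun i _ => (hxs i).2
      _ = 3 / 2 * μ * n := by simp [mul_comm]
  have hx's_le : x' ⬝ᵥ s ≤ 3 / 2 * μ * n + x' ⬝ᵥ s' := by linarith
  -- minimum bound per coordinate
  have hnpos : (0:ℝ) < n + x' ⬝ᵥ s' := by positivity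
  refine ⟨by positivity, fun j => ?_⟩
  have hsj : mx * s j ≤ x' ⬝ᵥ s := by
    calc mx * s j ≤ x' j * s j := mul_le_mul_of_nonneg_right (hmxle j) (hspos j).le
      _ ≤ ∑ i, x' i * s i :=
          Finset.single_le_sum (fun i _ => (mul_pos (hx'pos i) (hspos i)).le)
            (Finset.mem_univ j)
      _ = x' ⬝ᵥ s := rfl
  have hn1 : (1:ℝ) ≤ n := by exact_mod_cast hn
  rw [div_mul_eq_mul_div, div_le_iff₀ hnpos]
  have key1 : μ / 2 ≤ x j * s j := (hxs j).1
  have key2 : mx * s j ≤ 3 / 2 * μ * n + x' ⬝ᵥ s' := le_trans hsj hx's_le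
  nlinarith [mul_le_mul_of_nonneg_left key1 hmxpos.le,
    mul_le_mul_of_nonneg_left key2 (hxpos j).le,
    mul_nonneg (mul_nonneg (hxpos j).le (by positivity : (0:ℝ) ≤ (n:ℝ))) (sub_nonneg.2 hμ1),
    mul_pos (hxpos j) hg, mul_pos hμ0 hmxpos]
end

section
/- Under assumption A1, let x ∈ F_p⁰ and μ > 0 satisfy δ(x, μ) ≤ 1/2, and let z = (1/μ)X s(x,μ) where s(x,μ) is the projected dual solution attaining δ(x,μ). Suppose d̂ satisfies AX²Aᵀ d̂ = (1/μ)AX²c − Ax + ζ_x for some residual ζ_x ∈ ℝ^m, set λ_x = −Aᵀ(AAᵀ)⁻¹ζ_x, Δx̂ = −((1/μ)X²c − x) + X²Aᵀd̂ + λ_x, and x⁺ = x + Δx̂. Then x⁺ = X(2e − z + ψ_x), where ψ_x = XAᵀ(AX²Aᵀ)⁻¹ζ_x + X⁻¹λ_x, Ax⁺ = b, and δ(x⁺, μ) ≤ √2·δ(x, μ)² + (√(2n) + 1)·‖ψ_x‖. -/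
open Matrix

lemma enorm_eq_norm' {ι : Type*} [Fintype ι] (v : ι → ℝ) :
    _root_.enorm v = ‖(WithLp.equiv 2 (ι → ℝ)).symm v‖ := by
  simp [_root_.enorm, EuclideanSpace.norm_eq, Real.norm_eq_abs, sq_abs]

lemma enorm_add_le' {ι : Type*} [Fintype ι] (u v : ι → ℝ) :
    _root_.enorm (u + v) ≤ _root_.enorm u + _root_.enorm v := by
  rw [enorm_eq_norm', enorm_eq_norm', enorm_eq_norm']
  rw [show (WithLp.equiv 2 (ι → ℝ)).symm (u + v)
      = (WithLp.equiv 2 (ι → ℝ)).symm u + (WithLp.equiv 2 (ι → ℝ)).symm v from rfl]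
  exact norm_add_le _ _

lemma enorm_nonneg' {ι : Type*} [Fintype ι] (v : ι → ℝ) : 0 ≤ _root_.enorm v := Real.sqrt_nonneg _

lemma enorm_sq' {ι : Type*} [Fintype ι] (v : ι → ℝ) : _root_.enorm v ^ 2 = ∑ i, (v i) ^ 2 :=
  Real.sq_sqrt (Finset.sum_nonneg fun _ _ => sq_nonneg _)

lemma sq_sum_le_of_enorm_le {ι : Type*} [Fintype ι] {u v : ι → ℝ} (h : _root_.enorm u ≤ _root_.enorm v) :
    ∑ i, (u i) ^ 2 ≤ ∑ i, (v i) ^ 2 := by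
  rw [← enorm_sq', ← enorm_sq']
  exact pow_le_pow_left₀ (enorm_nonneg' u) h 2

lemma transpose_mulVec_inj {m n : ℕ} (A : Matrix (Fin m) (Fin n) ℝ)
    (hrank : A.rank = m) {v : Fin m → ℝ} (hv : Aᵀ *ᵥ v = 0) : v = 0 := by
  have h1 : Aᵀ.rank = m := by rw [Matrix.rank_transpose]; exact hrank
  have h2 := (Aᵀ.mulVecLin).finrank_range_add_finrank_ker
  rw [show Module.finrank ℝ (LinearMap.range Aᵀ.mulVecLin) = Aᵀ.rank from rfl, h1] at h2
  simp [Module.finrank_pi] at h2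
  have hmem : v ∈ LinearMap.ker Aᵀ.mulVecLin := by
    simp only [LinearMap.mem_ker, Matrix.mulVecLin_apply]; exact hv
  simp only [Matrix.mulVecLin_transpose] at hmem
  rw [h2] at hmem
  simpa using hmem

lemma normalPD {m n : ℕ} (A : Matrix (Fin m) (Fin n) ℝ) (x : Fin n → ℝ)
    (hx : ∀ i, x i ≠ 0) (hrank : A.rank = m) :
    (A * Matrix.diagonal x ^ 2 * Aᵀ).PosDef := by
  have hB : A * Matrix.diagonal x ^ 2 * Aᵀ
      = (A * Matrix.diagonal x) * (A * Matrix.diagonal x)ᵀ := by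
    rw [Matrix.transpose_mul, Matrix.diagonal_transpose, pow_two,
      Matrix.mul_assoc, Matrix.mul_assoc, Matrix.mul_assoc]
  refine Matrix.PosDef.of_dotProduct_mulVec_pos ?_ ?_
  · have := Matrix.posSemidef_self_mul_conjTranspose (A * Matrix.diagonal x)
    rw [Matrix.conjTranspose_eq_transpose_of_trivial] at this
    rw [hB]; exact this.1
  · intro v hv
    set B := A * Matrix.diagonal x with hBdef
    have key : star v ⬝ᵥ ((A * Matrix.diagonal x ^ 2 * Aᵀ) *ᵥ v)
        = (Bᵀ *ᵥ v) ⬝ᵥ (Bᵀ *ᵥ v) := by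
      rw [hB, ← Matrix.mulVec_mulVec, star_trivial, Matrix.dotProduct_mulVec]
      congr 1
      rw [← Matrix.transpose_transpose B, Matrix.vecMul_transpose, Matrix.transpose_transpose]
    rw [key]
    have hw : Bᵀ *ᵥ v ≠ 0 := by
      intro h0
      apply hv
      apply transpose_mulVec_inj A hrank
      funext i
      have h1 : (Bᵀ *ᵥ v) i = x i * ((Aᵀ *ᵥ v) i) := by
        rw [hBdef, Matrix.transpose_mul, Matrix.diagonal_transpose,
          ← Matrix.mulVec_mulVec, Matrix.mulVec_diagonal]
      rw [h0] at h1
      have := (mul_eq_zero.mp h1.symm).resolve_left (hx i)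
      simpa using this
    have h0 : (Bᵀ *ᵥ v) ⬝ᵥ (Bᵀ *ᵥ v) ≠ 0 := fun h => hw (dotProduct_self_eq_zero.mp h)
    exact lt_of_le_of_ne (Finset.sum_nonneg fun i _ => mul_self_nonneg _) (Ne.symm h0)

lemma opt_condition {m n : ℕ} (A : Matrix (Fin m) (Fin n) ℝ) (c : Fin n → ℝ)
    (x ssol zvec : Fin n → ℝ) (ysol : Fin m → ℝ) (μ : ℝ) (hμ : 0 < μ)
    (hsolfeas : Aᵀ *ᵥ ysol + ssol = c)
    (hsolmin : ∀ (y' : Fin m → ℝ) (s' : Fin n → ℝ), Aᵀ *ᵥ y' + s' = c → (∀ i, 0 ≤ s' i) →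
      _root_.enorm (μ⁻¹ • (Matrix.diagonal x *ᵥ ssol) - 1)
        ≤ _root_.enorm (μ⁻¹ • (Matrix.diagonal x *ᵥ s') - 1))
    (hzvec : zvec = μ⁻¹ • (Matrix.diagonal x *ᵥ ssol))
    (hspos : ∀ i, 0 < ssol i) :
    A *ᵥ (Matrix.diagonal x *ᵥ (zvec - 1)) = 0 := by
  set X := Matrix.diagonal x with hXdef
  set g := A *ᵥ (X *ᵥ (zvec - 1)) with hg
  set w := Aᵀ *ᵥ g with hwdef
  set u := μ⁻¹ • (X *ᵥ w) with hudef
  -- the inner product identity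
  have hip : ∑ i, (zvec i - 1) * u i = μ⁻¹ * (g ⬝ᵥ g) := by
    have e1 : ∑ i, (zvec i - 1) * u i = (zvec - 1) ⬝ᵥ u := by
      refine Finset.sum_congr rfl fun i _ => ?_
      simp [dotProduct]
    rw [e1, hudef, dotProduct_smul, smul_eq_mul]
    congr 1
    have e2 : (zvec - 1) ⬝ᵥ (X *ᵥ w) = (X *ᵥ (zvec - 1)) ⬝ᵥ w := by
      rw [Matrix.dotProduct_mulVec]
      congr 1
      funext i
      rw [hXdef, Matrix.vecMul_diagonal, Matrix.mulVec_diagonal, mul_comm]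
    rw [e2, hwdef, Matrix.dotProduct_mulVec, Matrix.vecMul_transpose, ← hg]
  -- the perturbation inequality
  have hpert : ∀ t : ℝ, (∀ i, 0 ≤ ssol i - t * w i) →
      0 ≤ -2 * t * (μ⁻¹ * (g ⬝ᵥ g)) + t^2 * ∑ i, (u i)^2 := by
    intro t hnn
    have hfeas' : Aᵀ *ᵥ (ysol + t • g) + (ssol - t • w) = c := by
      rw [Matrix.mulVec_add, Matrix.mulVec_smul, ← hwdef,
        show Aᵀ *ᵥ ysol + t • w + (ssol - t • w) = Aᵀ *ᵥ ysol + ssol from by abel,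
        hsolfeas]
    have hnn' : ∀ i, 0 ≤ (ssol - t • w) i := fun i => by
      simpa using hnn i
    have hle := hsolmin (ysol + t • g) (ssol - t • w) hfeas' hnn'
    have hveq : μ⁻¹ • (X *ᵥ (ssol - t • w)) - 1 = (zvec - 1) - t • u := by
      rw [hzvec, hudef, Matrix.mulVec_sub, Matrix.mulVec_smul]
      module
    rw [hveq, show μ⁻¹ • (X *ᵥ ssol) = zvec from hzvec.symm] at hle
    have hsq := sq_sum_le_of_enorm_le hle
    have hexp : ∑ i, (((zvec - 1) - t • u) i)^2
        = ∑ i, ((zvec i - 1)^2 + (-2 * t * ((zvec i - 1) * u i) + t^2 * (u i)^2)) := by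
      refine Finset.sum_congr rfl fun i _ => ?_
      simp only [Pi.sub_apply, Pi.smul_apply, Pi.one_apply, smul_eq_mul]
      ring
    rw [hexp, Finset.sum_add_distrib, Finset.sum_add_distrib] at hsq
    have hsq2 : ∑ i, ((zvec i - 1))^2 ≤ ∑ i, ((zvec - 1) i)^2 := by
      refine le_of_eq (Finset.sum_congr rfl fun i _ => ?_)
      simp
    have h3 : 0 ≤ ∑ i, (-2 * t * ((zvec i - 1) * u i)) + ∑ i, t^2 * (u i)^2 := by
      have := le_trans hsq2 hsq
      linarith
    calc (0:ℝ) ≤ ∑ i, (-2 * t * ((zvec i - 1) * u i)) + ∑ i, t^2 * (u i)^2 := h3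
      _ = -2 * t * (∑ i, (zvec i - 1) * u i) + t^2 * ∑ i, (u i)^2 := by
          rw [← Finset.mul_sum, ← Finset.mul_sum]
      _ = -2 * t * (μ⁻¹ * (g ⬝ᵥ g)) + t^2 * ∑ i, (u i)^2 := by rw [hip]
  -- conclude g = 0
  show g = 0
  have hGnn : 0 ≤ g ⬝ᵥ g := Finset.sum_nonneg fun i _ => mul_self_nonneg _
  set G := g ⬝ᵥ g with hGdef
  set U := ∑ i, (u i)^2 with hU
  have hU0 : 0 ≤ U := Finset.sum_nonneg fun i _ => sq_nonneg _
  clear_value g w u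
  rcases hGnn.lt_or_eq with hGpos | hGeq
  · exfalso
    set D := μ⁻¹ * G with hD
    have hDpos : 0 < D := mul_pos (inv_pos.mpr hμ) hGpos
    set K := ∑ i, |w i| / ssol i with hK
    have hK0 : 0 ≤ K :=
      Finset.sum_nonneg fun i _ => div_nonneg (abs_nonneg _) (hspos i).le
    set t := min (1/(K+1)) (D/(U+1)) with ht
    have htpos : 0 < t := lt_min (by positivity) (by positivity)
    have hnn : ∀ i, 0 ≤ ssol i - t * w i := by
      intro i
      have h1 : |w i| / ssol i ≤ K :=
        Finset.single_le_sum (f := fun j => |w j| / ssol j)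
          (fun j _ => div_nonneg (abs_nonneg _) (hspos j).le) (Finset.mem_univ i)
      have h1' : |w i| ≤ K * ssol i := by
        rw [div_le_iff₀ (hspos i)] at h1
        exact h1
      have h2 : t * w i ≤ t * |w i| :=
        mul_le_mul_of_nonneg_left (le_abs_self _) htpos.le
      have h3 : t * |w i| ≤ (1/(K+1)) * (K * ssol i) :=
        mul_le_mul (min_le_left _ _) h1' (abs_nonneg _) (by positivity)
      have h4 : (1/(K+1)) * (K * ssol i) ≤ ssol i := by
        rw [div_mul_eq_mul_div, one_mul, div_le_iff₀ (by positivity : (0:ℝ) < K + 1)]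
        nlinarith [hspos i]
      linarith
    have hineq := hpert t hnn
    have h5 : t * (U + 1) ≤ D := by
      have := min_le_right (1/(K+1)) (D/(U+1))
      rw [le_div_iff₀ (by positivity : (0:ℝ) < U + 1)] at this
      exact this
    nlinarith [mul_pos htpos hDpos, sq_nonneg t]
  · exact dotProduct_self_eq_zero.mp hGeq.symm

lemma aux_sq_sq {a S : ℝ} (h : a^2 ≤ S) : (a^2)^2 ≤ a^2 * S := by
  calc (a^2)^2 = a^2 * a^2 := by ring
    _ ≤ a^2 * S := mul_le_mul_of_nonneg_left h (sq_nonneg a)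

lemma aux_zpsi {z ψ : ℝ} (h1 : 1/2 ≤ z) (h2 : z ≤ 3/2) : (z * ψ)^2 ≤ (9/4) * ψ^2 := by
  have hz : z^2 ≤ 9/4 := by nlinarith
  calc (z * ψ)^2 = z^2 * ψ^2 := by ring
    _ ≤ (9/4) * ψ^2 := mul_le_mul_of_nonneg_right hz (sq_nonneg ψ)

lemma aux_fin2 {s E : ℝ} (h1 : 1 ≤ s) (h2 : 0 ≤ E) : (3/2) * E ≤ (s + 1) * E := by
  nlinarith

/-- form of the inexact primal IPM iterate, its primal
feasibility, and the induced proximity bound. -/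
theorem stmt_12 {m n : ℕ} (A : Matrix (Fin m) (Fin n) ℝ) (b : Fin m → ℝ) (c : Fin n → ℝ)
    -- Assumption A1: nonempty primal and dual interiors, full row rank
    (hrank : A.rank = m)
    (hFp0 : ∃ x0 : Fin n → ℝ, A *ᵥ x0 = b ∧ ∀ i, 0 < x0 i)
    (hFd0 : ∃ (y0 : Fin m → ℝ) (s0 : Fin n → ℝ), Aᵀ *ᵥ y0 + s0 = c ∧ ∀ i, 0 < s0 i)
    (x : Fin n → ℝ) (hxfeas : A *ᵥ x = b) (hxpos : ∀ i, 0 < x i)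
    (μ : ℝ) (hμ : 0 < μ)
    (hδ : proxMin A c x μ ≤ 1 / 2)
    -- the projected dual solution s(x, μ) attaining δ(x, μ)
    (ysol : Fin m → ℝ) (ssol : Fin n → ℝ)
    (hsolfeas : Aᵀ *ᵥ ysol + ssol = c) (hsolnn : ∀ i, 0 ≤ ssol i)
    (hsolmin : ∀ (y' : Fin m → ℝ) (s' : Fin n → ℝ), Aᵀ *ᵥ y' + s' = c → (∀ i, 0 ≤ s' i) →
      _root_.enorm (μ⁻¹ • (Matrix.diagonal x *ᵥ ssol) - 1)
        ≤ _root_.enorm (μ⁻¹ • (Matrix.diagonal x *ᵥ s') - 1))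
    (zvec : Fin n → ℝ) (hzvec : zvec = μ⁻¹ • (Matrix.diagonal x *ᵥ ssol))
    -- inexact normal equation solve
    (ζx : Fin m → ℝ) (dhat : Fin m → ℝ)
    (hdhat : (A * Matrix.diagonal x ^ 2 * Aᵀ) *ᵥ dhat
      = μ⁻¹ • ((A * Matrix.diagonal x ^ 2) *ᵥ c) - A *ᵥ x + ζx)
    (lamx : Fin n → ℝ) (hlamx : lamx = -((Aᵀ * (A * Aᵀ)⁻¹) *ᵥ ζx))
    (Δxhat : Fin n → ℝ)
    (hΔxhat : Δxhat = -(μ⁻¹ • ((Matrix.diagonal x ^ 2) *ᵥ c) - x)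
      + (Matrix.diagonal x ^ 2 * Aᵀ) *ᵥ dhat + lamx)
    (xplus : Fin n → ℝ) (hxplus : xplus = x + Δxhat)
    (ψx : Fin n → ℝ)
    (hψx : ψx = (Matrix.diagonal x * Aᵀ * (A * Matrix.diagonal x ^ 2 * Aᵀ)⁻¹) *ᵥ ζx
      + (Matrix.diagonal x)⁻¹ *ᵥ lamx) :
    xplus = Matrix.diagonal x *ᵥ ((2 : ℝ) • (1 : Fin n → ℝ) - zvec + ψx) ∧
    A *ᵥ xplus = b ∧
    proxMin A c xplus μ
      ≤ Real.sqrt 2 * (proxMin A c x μ) ^ 2 + (Real.sqrt (2 * n) + 1) * _root_.enorm ψx := by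
  classical
  have hxne : ∀ i, x i ≠ 0 := fun i => ne_of_gt (hxpos i)
  set X := Matrix.diagonal x with hXdef
  set M := A * Matrix.diagonal x ^ 2 * Aᵀ with hMdef
  have hMpd : M.PosDef := normalPD A x hxne hrank
  have hMunit : IsUnit M.det := isUnit_iff_ne_zero.mpr (ne_of_gt hMpd.det_pos)
  have hMinv1 : M * M⁻¹ = 1 := Matrix.mul_nonsing_inv M hMunit
  have hMinv2 : M⁻¹ * M = 1 := Matrix.nonsing_inv_mul M hMunit
  have hAApd : (A * Aᵀ).PosDef := by
    have := normalPD A (fun _ => (1:ℝ)) (fun _ => one_ne_zero) hrank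
    simpa [Matrix.diagonal_one] using this
  have hAAinv : (A * Aᵀ) * (A * Aᵀ)⁻¹ = 1 :=
    Matrix.mul_nonsing_inv _ (isUnit_iff_ne_zero.mpr (ne_of_gt hAApd.det_pos))
  have hXunit : IsUnit X.det := by
    rw [hXdef, Matrix.det_diagonal]
    exact isUnit_iff_ne_zero.mpr (Finset.prod_ne_zero_iff.mpr fun i _ => hxne i)
  have hXinv : X * X⁻¹ = 1 := Matrix.mul_nonsing_inv X hXunit
  have hX1 : X *ᵥ (1 : Fin n → ℝ) = x := by
    funext i; rw [hXdef, Matrix.mulVec_diagonal, Pi.one_apply, mul_one]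
  -- delta equals _root_.enorm (zvec - 1)
  have hbdd : ∀ (x' : Fin n → ℝ), BddBelow {r : ℝ | ∃ (y : Fin m → ℝ) (s : Fin n → ℝ),
      Aᵀ *ᵥ y + s = c ∧ (∀ i, 0 ≤ s i) ∧
      r = _root_.enorm (μ⁻¹ • (Matrix.diagonal x' *ᵥ s) - 1)} := by
    intro x'
    refine ⟨0, fun r hr => ?_⟩
    obtain ⟨y', s', _, _, rfl⟩ := hr
    exact enorm_nonneg' _
  have hδeq : proxMin A c x μ = _root_.enorm (zvec - 1) := by
    rw [hzvec]
    apply le_antisymm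
    · exact csInf_le (hbdd x) ⟨ysol, ssol, hsolfeas, hsolnn, rfl⟩
    · refine le_csInf ⟨_, ysol, ssol, hsolfeas, hsolnn, rfl⟩ ?_
      rintro r ⟨y', s', h1, h2, rfl⟩
      exact hsolmin y' s' h1 h2
  -- componentwise bounds on zvec
  have hsum : ∑ i, (zvec i - 1)^2 ≤ 1/4 := by
    have h1 : _root_.enorm (zvec - 1) ≤ 1/2 := hδeq ▸ hδ
    have h2 : (_root_.enorm (zvec - 1))^2 ≤ (1/2 : ℝ)^2 := pow_le_pow_left₀ (enorm_nonneg' _) h1 2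
    rw [enorm_sq'] at h2
    calc ∑ i, (zvec i - 1)^2 = ∑ i, ((zvec - 1) i)^2 := by
          exact Finset.sum_congr rfl fun i _ => by simp
      _ ≤ (1/2:ℝ)^2 := h2
      _ = 1/4 := by norm_num
  have hzcomp : ∀ i, (zvec i - 1)^2 ≤ 1/4 := by
    intro i
    refine le_trans ?_ hsum
    exact Finset.single_le_sum (f := fun j => (zvec j - 1)^2) (fun j _ => sq_nonneg _) (Finset.mem_univ i)
  have hzlo : ∀ i, 1/2 ≤ zvec i := fun i => by nlinarith [hzcomp i]
  have hzhi : ∀ i, zvec i ≤ 3/2 := fun i => by nlinarith [hzcomp i]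
  have hzi : ∀ i, zvec i = μ⁻¹ * (x i * ssol i) := by
    intro i
    rw [hzvec]; simp [hXdef, Matrix.mulVec_diagonal]
  have hspos : ∀ i, 0 < ssol i := by
    intro i
    rcases (hsolnn i).lt_or_eq with h | h
    · exact h
    · exfalso
      have := hzlo i
      rw [hzi i, ← h] at this
      norm_num at this
  -- optimality condition
  have hopt : A *ᵥ (X *ᵥ (zvec - 1)) = 0 :=
    opt_condition A c x ssol zvec ysol μ hμ hsolfeas hsolmin hzvec hspos
  -- key identity
  have hXz : X *ᵥ zvec = x + X *ᵥ (zvec - 1) := by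
    have h0 : zvec = (zvec - 1) + 1 := by abel
    nth_rewrite 1 [h0]
    rw [Matrix.mulVec_add, hX1]
    abel
  have hs2 : μ⁻¹ • ((A * X ^ 2) *ᵥ ssol) = A *ᵥ x := by
    have h1 : μ⁻¹ • ((A * X ^ 2) *ᵥ ssol) = A *ᵥ (X *ᵥ zvec) := by
      rw [hzvec]
      simp [Matrix.mulVec_smul, Matrix.mulVec_mulVec, Matrix.mul_assoc, pow_two]
    rw [h1, hXz, Matrix.mulVec_add, hopt, add_zero]
  have hkey : M *ᵥ (μ⁻¹ • ysol) = μ⁻¹ • ((A * X ^ 2) *ᵥ c) - A *ᵥ x := by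
    have hys : Aᵀ *ᵥ ysol = c - ssol := by rw [← hsolfeas]; abel
    have h2 : M *ᵥ (μ⁻¹ • ysol) = μ⁻¹ • ((A * X ^ 2) *ᵥ (Aᵀ *ᵥ ysol)) := by
      rw [hMdef, ← hXdef]
      simp [Matrix.mulVec_smul, Matrix.mulVec_mulVec, Matrix.mul_assoc]
    rw [h2, hys, Matrix.mulVec_sub, smul_sub, hs2]
  -- explicit form of the inexact step
  have hdd : dhat = M⁻¹ *ᵥ (μ⁻¹ • ((A * X ^ 2) *ᵥ c) - A *ᵥ x + ζx) := by
    rw [← hdhat, Matrix.mulVec_mulVec, hMinv2, Matrix.one_mulVec]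
  have hMS : M⁻¹ *ᵥ (μ⁻¹ • ((A * X ^ 2) *ᵥ c) - A *ᵥ x) = μ⁻¹ • ysol := by
    rw [← hkey, Matrix.mulVec_mulVec, hMinv2, Matrix.one_mulVec]
  have hd : (X ^ 2 * Aᵀ) *ᵥ dhat
      = μ⁻¹ • ((X ^ 2 * Aᵀ) *ᵥ ysol) + (X ^ 2 * Aᵀ * M⁻¹) *ᵥ ζx := by
    rw [hdd, Matrix.mulVec_add, hMS, Matrix.mulVec_add, Matrix.mulVec_smul,
      Matrix.mulVec_mulVec]
  -- part 1
  have hpsi : X *ᵥ ψx = (X ^ 2 * Aᵀ * M⁻¹) *ᵥ ζx + lamx := by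
    rw [hψx, Matrix.mulVec_add, Matrix.mulVec_mulVec, Matrix.mulVec_mulVec, hXinv,
      Matrix.one_mulVec, ← Matrix.mul_assoc, ← Matrix.mul_assoc, ← pow_two]
  have hXs2 : X *ᵥ zvec = μ⁻¹ • (X ^ 2 *ᵥ ssol) := by
    rw [hzvec]
    simp [Matrix.mulVec_smul, Matrix.mulVec_mulVec, pow_two]
  have hcs : (X ^ 2) *ᵥ c = (X ^ 2 * Aᵀ) *ᵥ ysol + X ^ 2 *ᵥ ssol := by
    rw [← Matrix.mulVec_mulVec, ← Matrix.mulVec_add, hsolfeas]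
  have part1 : xplus = X *ᵥ ((2 : ℝ) • (1 : Fin n → ℝ) - zvec + ψx) := by
    rw [hxplus, hΔxhat, hd, Matrix.mulVec_add, Matrix.mulVec_sub, Matrix.mulVec_smul,
      hX1, hXs2, hpsi, hcs]
    module
  -- part 2
  have hAlam : A *ᵥ lamx = -ζx := by
    rw [hlamx, Matrix.mulVec_neg, Matrix.mulVec_mulVec, ← Matrix.mul_assoc, hAAinv,
      Matrix.one_mulVec]
  have hAd : A *ᵥ ((X ^ 2 * Aᵀ) *ᵥ dhat) = μ⁻¹ • ((A * X ^ 2) *ᵥ c) - A *ᵥ x + ζx := by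
    rw [Matrix.mulVec_mulVec, ← Matrix.mul_assoc,
      show A * X ^ 2 * Aᵀ = M from by rw [hMdef, hXdef], hdhat]
  have part2 : A *ᵥ xplus = b := by
    rw [hxplus, Matrix.mulVec_add, hΔxhat, Matrix.mulVec_add, Matrix.mulVec_add,
      Matrix.mulVec_neg, Matrix.mulVec_sub, Matrix.mulVec_smul, Matrix.mulVec_mulVec,
      hAd, hAlam, hxfeas]
    rw [show A * X ^ 2 = A * X ^ 2 from rfl]
    abel_nf
  refine ⟨part1, part2, ?_⟩
  -- part 3
  have hub : proxMin A c xplus μ ≤ _root_.enorm (μ⁻¹ • (Matrix.diagonal xplus *ᵥ ssol) - 1) :=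
    csInf_le (hbdd xplus) ⟨ysol, ssol, hsolfeas, hsolnn, rfl⟩
  set q : Fin n → ℝ := fun i => -((zvec i - 1)^2) with hq
  set r : Fin n → ℝ := fun i => zvec i * ψx i with hr
  have hvec : μ⁻¹ • (Matrix.diagonal xplus *ᵥ ssol) - 1 = q + r := by
    funext i
    have hxp : xplus i = x i * ((2:ℝ) - zvec i + ψx i) := by
      rw [part1, hXdef, Matrix.mulVec_diagonal]
      simp
    simp only [Pi.sub_apply, Pi.add_apply, Pi.smul_apply, Pi.one_apply, smul_eq_mul,
      Matrix.mulVec_diagonal, hq, hr]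
    rw [hxp]
    linear_combination (-((2:ℝ) - zvec i + ψx i)) * (hzi i)
  have htri : _root_.enorm (q + r) ≤ _root_.enorm q + _root_.enorm r := enorm_add_le' q r
  have hq1 : _root_.enorm q ≤ (_root_.enorm (zvec - 1))^2 := by
    have hb : ∑ i, ((zvec i - 1)^2)^2 ≤ (∑ i, (zvec i - 1)^2)^2 := by
      have h1 : ∀ i ∈ Finset.univ, ((zvec i - 1)^2)^2
          ≤ (zvec i - 1)^2 * ∑ j, (zvec j - 1)^2 := fun i _ => by
        have h2 := Finset.single_le_sum (f := fun j => (zvec j - 1)^2)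
          (fun j _ => sq_nonneg _) (Finset.mem_univ i)
        exact aux_sq_sq h2
      calc ∑ i, ((zvec i - 1)^2)^2 ≤ ∑ i, ((zvec i - 1)^2 * ∑ j, (zvec j - 1)^2) :=
            Finset.sum_le_sum h1
        _ = (∑ i, (zvec i - 1)^2)^2 := by rw [← Finset.sum_mul]; ring
    calc _root_.enorm q = Real.sqrt (∑ i, ((zvec i - 1)^2)^2) := by
          unfold _root_.enorm
          congr 1
          exact Finset.sum_congr rfl fun i _ => by simp [hq]
      _ ≤ Real.sqrt ((∑ i, (zvec i - 1)^2)^2) := Real.sqrt_le_sqrt hb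
      _ = ∑ i, (zvec i - 1)^2 := Real.sqrt_sq (Finset.sum_nonneg fun i _ => sq_nonneg _)
      _ = ∑ i, ((zvec - 1) i)^2 := Finset.sum_congr rfl fun i _ => by simp
      _ = (_root_.enorm (zvec - 1))^2 := (enorm_sq' _).symm
  have hr1 : _root_.enorm r ≤ (3/2) * _root_.enorm ψx := by
    have h1 : ∀ i, (r i)^2 ≤ (9/4) * (ψx i)^2 := fun i => by
      simp only [hr]
      exact aux_zpsi (hzlo i) (hzhi i)
    calc _root_.enorm r = Real.sqrt (∑ i, (r i)^2) := rfl
      _ ≤ Real.sqrt (∑ i, (9/4) * (ψx i)^2) :=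
          Real.sqrt_le_sqrt (Finset.sum_le_sum fun i _ => h1 i)
      _ = Real.sqrt ((9/4) * ∑ i, (ψx i)^2) := by rw [← Finset.mul_sum]
      _ = (3/2) * Real.sqrt (∑ i, (ψx i)^2) := by
          rw [Real.sqrt_mul (by norm_num) _,
            show (9/4:ℝ) = (3/2)^2 by norm_num, Real.sqrt_sq (by norm_num)]
      _ = (3/2) * _root_.enorm ψx := rfl
  have hone : (1:ℝ) ≤ Real.sqrt 2 := by
    rw [show (1:ℝ) = Real.sqrt 1 by simp]
    exact Real.sqrt_le_sqrt (by norm_num)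
  have hfin1 : (_root_.enorm (zvec - 1))^2 ≤ Real.sqrt 2 * (_root_.enorm (zvec - 1))^2 :=
    le_mul_of_one_le_left (sq_nonneg _) hone
  have hfin2 : (3/2) * _root_.enorm ψx ≤ (Real.sqrt (2 * n) + 1) * _root_.enorm ψx := by
    rcases Nat.eq_zero_or_pos n with hn | hn
    · have h0 : _root_.enorm ψx = 0 := by
        subst hn
        simp [_root_.enorm]
      rw [h0, mul_zero, mul_zero]
    · have h2n : (2:ℝ) ≤ 2 * (n:ℝ) := by
        have : (1:ℝ) ≤ (n:ℝ) := by exact_mod_cast hn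
        linarith
      have h4 : (1:ℝ) ≤ Real.sqrt (2 * n) := le_trans hone (Real.sqrt_le_sqrt h2n)
      exact aux_fin2 h4 (enorm_nonneg' ψx)
  rw [hδeq]
  calc proxMin A c xplus μ ≤ _root_.enorm (q + r) := hvec ▸ hub
    _ ≤ _root_.enorm q + _root_.enorm r := htri
    _ ≤ (_root_.enorm (zvec - 1))^2 + (3/2) * _root_.enorm ψx := add_le_add hq1 hr1
    _ ≤ Real.sqrt 2 * (_root_.enorm (zvec - 1))^2 + (Real.sqrt (2 * n) + 1) * _root_.enorm ψx :=
        add_le_add hfin1 hfin2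
end
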